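/- Combining the two progress inequalities: under the same setup (Γ ≥ L_max, update with inexact gradient g̃_{k_t} at coordinate k_t with increment Δx_{k_t}^t), F(x^t) − F(x^{t+1}) ≥ (1/2)·Ŵ_{k_t}(g_{k_t}^t, x_{k_t}^t) + (Γ/8)·(Δx_{k_t}^t)² − (1/Γ)·(g_{k_t}^t − g̃_{k_t}^t)². -/

import Mathlib

/-- If `0 ≤ t*A + Γ*t²*D²/2` for all small positive `t`, then `0 ≤ A`. -/
lemma aux_limit (Γ A D : ℝ) (hΓpos : 0 < Γ)
    (key : ∀ t : ℝ, 0 < t → t ≤ 1 → 0 ≤ t * A + Γ * t ^ 2 * D ^ 2 / 2) : 0 ≤ A := by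
  by_contra hneg
  push_neg at hneg
  rcases eq_or_ne D 0 with hD0 | hD0
  · have h := key 1 one_pos le_rfl
    rw [hD0] at h; nlinarith
  · have hDsq : 0 < Γ * D ^ 2 := by positivity
    set t0 : ℝ := min 1 (-A / (Γ * D ^ 2)) with ht0
    have ht0pos : 0 < t0 := lt_min one_pos (div_pos (by linarith) hDsq)
    have ht0le : t0 ≤ 1 := min_le_left _ _
    have h1 := key t0 ht0pos ht0le
    have h2 : t0 ≤ -A / (Γ * D ^ 2) := min_le_right _ _
    have h3 : t0 * (Γ * D ^ 2) ≤ -A := (le_div_iff₀ hDsq).mp h2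
    have h4 : Γ * t0 ^ 2 * D ^ 2 / 2 ≤ -A * t0 / 2 := by nlinarith
    have h5 : 0 ≤ t0 * (A / 2) := by linarith
    have h6 : 0 ≤ A / 2 := nonneg_of_mul_nonneg_right h5 ht0pos
    linarith

/-- Strong-convexity-type lower bound at a minimizer of `d ↦ g·d + Γd²/2 + Ψ(x+d)`. -/
lemma min_strong_lb (Ψj : ℝ → ℝ) (hΨj : ConvexOn ℝ Set.univ Ψj)
    (Γ g x dt : ℝ) (hΓpos : 0 < Γ)
    (hmin : ∀ d : ℝ, g * dt + Γ * dt ^ 2 / 2 + Ψj (x + dt) - Ψj x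
        ≤ g * d + Γ * d ^ 2 / 2 + Ψj (x + d) - Ψj x) (d : ℝ) :
    g * dt + Γ * dt ^ 2 / 2 + Ψj (x + dt) + Γ / 2 * (d - dt) ^ 2
      ≤ g * d + Γ * d ^ 2 / 2 + Ψj (x + d) := by
  have key : ∀ t : ℝ, 0 < t → t ≤ 1 →
      0 ≤ t * (g * (d - dt) + Γ * dt * (d - dt) + (Ψj (x + d) - Ψj (x + dt)))
        + Γ * t ^ 2 * (d - dt) ^ 2 / 2 := by
    intro t ht ht1
    have hmin' := hmin (dt + t * (d - dt))
    have hconv := hΨj.2 (Set.mem_univ (x + dt)) (Set.mem_univ (x + d))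
      (by linarith : (0:ℝ) ≤ 1 - t) ht.le (by ring)
    have hpt : (1 - t) • (x + dt) + t • (x + d) = x + (dt + t * (d - dt)) := by
      simp only [smul_eq_mul]; ring
    rw [hpt] at hconv
    simp only [smul_eq_mul] at hconv
    nlinarith [hmin', hconv]
  have hA0 : 0 ≤ g * (d - dt) + Γ * dt * (d - dt) + (Ψj (x + d) - Ψj (x + dt)) :=
    aux_limit Γ _ (d - dt) hΓpos key
  nlinarith [hA0]

/-- Coordinate descent lemma: quadratic upper bound along coordinate `j`. -/
lemma coord_descent {n : ℕ} (f : (Fin n → ℝ) → ℝ)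
    (grad : (Fin n → ℝ) → Fin n → ℝ)
    (hderiv : ∀ (x : Fin n → ℝ) (k : Fin n),
      HasDerivAt (fun r => f (Function.update x k r)) (grad x k) (x k))
    (Lj Γ : ℝ) (hΓpos : 0 < Γ) (hLΓ : Lj ≤ Γ)
    (j : Fin n) (xt : Fin n → ℝ)
    (hLip : ∀ r : ℝ,
      |grad (Function.update xt j (xt j + r)) j - grad xt j| ≤ Lj * |r|)
    (d : ℝ) :
    f (Function.update xt j (xt j + d))
      ≤ f xt + grad xt j * d + Γ * d ^ 2 / 2 := by
  set G : ℝ → ℝ := fun s => grad (Function.update xt j s) j with hGdef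
  set ψ : ℝ → ℝ := fun s => f (Function.update xt j s) with hψdef
  have hG : ∀ s : ℝ, HasDerivAt ψ (G s) s := by
    intro s
    have h := hderiv (Function.update xt j s) j
    simp only [Function.update_idem, Function.update_self] at h
    exact h
  set g : ℝ := grad xt j with hg
  have hψx : ψ (xt j) = f xt := by simp [hψdef, Function.update_eq_self]
  set h : ℝ → ℝ := fun r => g * r + Γ * r ^ 2 / 2 - ψ (xt j + r) + ψ (xt j) with hhdef
  have hh : ∀ r : ℝ, HasDerivAt h (g + Γ * r - G (xt j + r)) r := by
    intro r
    have h1 : HasDerivAt (fun r : ℝ => ψ (xt j + r)) (G (xt j + r)) r := by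
      have := (hG (xt j + r)).comp r ((hasDerivAt_id r).const_add (xt j))
      simpa [Function.comp_def] using this
    have h2 : HasDerivAt (fun r : ℝ => g * r + Γ * r ^ 2 / 2) (g + Γ * r) r := by
      have ha : HasDerivAt (fun r : ℝ => g * r) g r := by
        simpa using (hasDerivAt_id r).const_mul g
      have hb : HasDerivAt (fun r : ℝ => Γ * r ^ 2 / 2) (Γ * r) r := by
        have := ((hasDerivAt_pow 2 r).const_mul Γ).div_const 2
        refine this.congr_deriv ?_
        push_cast
        ring
      exact ha.add hb
    exact (h2.sub h1).add_const (ψ (xt j))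
  have hcont : Continuous h := by
    have : Differentiable ℝ h := fun r => (hh r).differentiableAt
    exact this.continuous
  have h0 : h 0 = 0 := by simp [hhdef]
  have key : 0 ≤ h d := by
    rcases le_or_gt 0 d with hd | hd
    · have mono : MonotoneOn h (Set.Icc 0 d) := by
        apply monotoneOn_of_deriv_nonneg (convex_Icc 0 d) hcont.continuousOn
        · exact fun r _ => ((hh r).differentiableAt).differentiableWithinAt
        · intro r hr
          rw [interior_Icc] at hr
          rw [(hh r).deriv]
          have h1 := le_of_abs_le (hLip r)
          have hrpos : 0 < r := hr.1
          rw [abs_of_pos hrpos] at h1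
          nlinarith [hr.1.le, hLΓ]
      have := mono (Set.left_mem_Icc.2 hd) (Set.right_mem_Icc.2 hd) hd
      linarith
    · have anti : AntitoneOn h (Set.Icc d 0) := by
        apply antitoneOn_of_deriv_nonpos (convex_Icc d 0) hcont.continuousOn
        · exact fun r _ => ((hh r).differentiableAt).differentiableWithinAt
        · intro r hr
          rw [interior_Icc] at hr
          rw [(hh r).deriv]
          have h2 := hLip r
          have hrneg : r < 0 := hr.2
          have h4 : -(Lj * |r|) ≤ grad (Function.update xt j (xt j + r)) j - grad xt j := by
            have := abs_le.mp h2
            linarith [this.1]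
          rw [abs_of_neg hrneg] at h4
          nlinarith [hr.2.le, hLΓ, h4]
      have := anti (Set.left_mem_Icc.2 hd.le) (Set.right_mem_Icc.2 hd.le) hd.le
      linarith
  have hfinal : ψ (xt j + d) ≤ ψ (xt j) + g * d + Γ * d ^ 2 / 2 := by
    simp only [hhdef] at key; linarith
  rw [hψx] at hfinal
  exact hfinal

/-- Combined progress inequality (average of the two halves of the discrete improvement
lemma): `F(xᵗ) − F(xᵗ⁺¹) ≥ (1/2) Ŵ_{k_t}(g,x) + (Γ/8)(Δx)² − (1/Γ)(g − g̃)²`. -/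
theorem progress_combined
    {n : ℕ} (f : (Fin n → ℝ) → ℝ) (hf : ConvexOn ℝ Set.univ f)
    (Ψ : Fin n → ℝ → ℝ) (hΨ : ∀ k, ConvexOn ℝ Set.univ (Ψ k))
    (grad : (Fin n → ℝ) → Fin n → ℝ)
    (hderiv : ∀ (x : Fin n → ℝ) (k : Fin n),
      HasDerivAt (fun r => f (Function.update x k r)) (grad x k) (x k))
    (L : Fin n → ℝ) (Γ : ℝ) (hΓpos : 0 < Γ) (hΓ : ∀ k, L k ≤ Γ)
    (hLip : ∀ (x : Fin n → ℝ) (k : Fin n) (r : ℝ),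
      |grad (Function.update x k (x k + r)) k - grad x k| ≤ L k * |r|)
    (j : Fin n) (xt : Fin n → ℝ) (gtil dtil dj : ℝ)
    (hdtil : ∀ d : ℝ,
      gtil * dtil + Γ * dtil ^ 2 / 2 + Ψ j (xt j + dtil) - Ψ j (xt j)
        ≤ gtil * d + Γ * d ^ 2 / 2 + Ψ j (xt j + d) - Ψ j (xt j))
    (hdj : ∀ d : ℝ,
      grad xt j * dj + Γ * dj ^ 2 / 2 + Ψ j (xt j + dj) - Ψ j (xt j)
        ≤ grad xt j * d + Γ * d ^ 2 / 2 + Ψ j (xt j + d) - Ψ j (xt j)) :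
    (f xt + ∑ k, Ψ k (xt k))
      - (f (Function.update xt j (xt j + dtil))
          + ∑ k, Ψ k (Function.update xt j (xt j + dtil) k))
      ≥ 1 / 2 * -(grad xt j * dj + Γ * dj ^ 2 / 2 + Ψ j (xt j + dj) - Ψ j (xt j))
        + Γ / 8 * dtil ^ 2 - 1 / Γ * (grad xt j - gtil) ^ 2 := by
  set g := grad xt j with hg
  -- descent along coordinate j
  have HA := coord_descent f grad hderiv (L j) Γ hΓpos (hΓ j) j xt (hLip xt j) dtil
  -- sum splitting
  have Hsum : ∑ k, Ψ k (Function.update xt j (xt j + dtil) k)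
      = ∑ k, Ψ k (xt k) - Ψ j (xt j) + Ψ j (xt j + dtil) := by
    have hfun : (fun k => Ψ k (Function.update xt j (xt j + dtil) k))
        = Function.update (fun k => Ψ k (xt k)) j (Ψ j (xt j + dtil)) := by
      funext k
      rcases eq_or_ne k j with rfl | hk
      · simp
      · simp [Function.update_of_ne hk]
    rw [hfun, Finset.sum_update_of_mem (Finset.mem_univ j),
      Finset.sum_eq_sum_sdiff_singleton_add (Finset.mem_univ j) (fun k => Ψ k (xt k))]
    ring
  -- strong lower bounds at the minimizer dtil of the inexact model
  have HB0 := min_strong_lb (Ψ j) (hΨ j) Γ gtil (xt j) dtil hΓpos hdtil 0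
  have HBj := min_strong_lb (Ψ j) (hΨ j) Γ gtil (xt j) dtil hΓpos hdtil dj
  simp only [add_zero, mul_zero, zero_pow, zero_mul] at HB0
  -- ab ≤ a²/Γ + Γb²/4 inequalities
  have key1 : (g - gtil) * dtil ≤ 1 / Γ * (g - gtil) ^ 2 + Γ / 4 * dtil ^ 2 := by
    have hid : 1 / Γ * (g - gtil) ^ 2 + Γ / 4 * dtil ^ 2 - (g - gtil) * dtil
        = 1 / Γ * ((g - gtil) - Γ * dtil / 2) ^ 2 := by
      field_simp; ring
    nlinarith [mul_nonneg (by positivity : (0:ℝ) ≤ 1 / Γ)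
      (sq_nonneg ((g - gtil) - Γ * dtil / 2)), hid]
  have key2 : (g - gtil) * (dtil - dj)
      ≤ 1 / Γ * (g - gtil) ^ 2 + Γ / 4 * (dtil - dj) ^ 2 := by
    have hid : 1 / Γ * (g - gtil) ^ 2 + Γ / 4 * (dtil - dj) ^ 2
        - (g - gtil) * (dtil - dj)
        = 1 / Γ * ((g - gtil) - Γ * (dtil - dj) / 2) ^ 2 := by
      field_simp; ring
    nlinarith [mul_nonneg (by positivity : (0:ℝ) ≤ 1 / Γ)
      (sq_nonneg ((g - gtil) - Γ * (dtil - dj) / 2)), hid]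
  have hsq : 0 ≤ Γ / 4 * (dtil - dj) ^ 2 := by positivity
  rw [Hsum]
  nlinarith [HA, HB0, HBj, key1, key2, hsq]
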